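/- For a uniformly random permutation σ of Z/nZ, any j ∈ Z/nZ and any k with 2 ≤ n − k, the probability that exactly k elements i satisfy i − σ(i) = j (mod n) is strictly greater than 1/(2·e·k!). -/

import Mathlib

open Finset Equiv

lemma factorial_le_three_numDerangements :
    ∀ l : ℕ, Nat.factorial (2 + l) ≤ 3 * numDerangements (2 + l) ∧
      Nat.factorial (2 + l + 1) ≤ 3 * numDerangements (2 + l + 1) := by
  intro l
  induction l with
  | zero => norm_num [numDerangements, Nat.factorial]
  | succ m ih =>
    obtain ⟨h1, h2⟩ := ih
    refine ⟨by simpa [show 2 + (m+1) = 2 + m + 1 by ring] using h2, ?_⟩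
    have h3 : 2 + (m + 1) + 1 = (2 + m) + 2 := by ring
    rw [h3, numDerangements_add_two]
    have hf : Nat.factorial ((2+m)+2) = (2+m+2) * ((2+m+1) * Nat.factorial (2+m)) := by
      rw [Nat.factorial_succ, Nat.factorial_succ]
    have hf2 : Nat.factorial (2+m+1) = (2+m+1) * Nat.factorial (2+m) := Nat.factorial_succ _
    rw [hf]
    calc (2+m+2) * ((2+m+1) * Nat.factorial (2+m))
        = (2+m+1) * (Nat.factorial (2+m) + ((2+m+1) * Nat.factorial (2+m))) := by ring
      _ ≤ (2+m+1) * (3 * numDerangements (2+m) + 3 * numDerangements (2+m+1)) := by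
          apply Nat.mul_le_mul_left
          exact Nat.add_le_add h1 (hf2 ▸ h2)
      _ = 3 * ((2+m+1) * (numDerangements (2+m) + numDerangements (2+m+1))) := by ring

lemma fact_le_3D (m : ℕ) (hm : 2 ≤ m) : Nat.factorial m ≤ 3 * numDerangements m := by
  obtain ⟨l, rfl⟩ := Nat.exists_eq_add_of_le hm
  exact (factorial_le_three_numDerangements l).1

lemma filter_shift_eq (n : ℕ) [NeZero n] (j : ZMod n) (S : Finset (ZMod n))
    (d : Equiv.Perm {x : ZMod n // x ∈ Sᶜ}) (hd : ∀ x, d x ≠ x) :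
    Finset.univ.filter
      (fun i : ZMod n => i - ((Equiv.Perm.ofSubtype d).trans (Equiv.addRight (-j))) i = j) = S := by
  ext i
  rw [Finset.mem_filter]
  simp only [Finset.mem_filter, Finset.mem_univ, true_and, Equiv.trans_apply, Equiv.coe_addRight]
  constructor
  · intro h
    by_contra hi
    have hi' : i ∈ Sᶜ := Finset.mem_compl.2 hi
    rw [Equiv.Perm.ofSubtype_apply_of_mem d hi'] at h
    have : (d ⟨i, hi'⟩ : ZMod n) = i := by linear_combination -h
    exact hd ⟨i, hi'⟩ (Subtype.ext this)
  · intro hi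
    have hi' : i ∉ Sᶜ := by simp [hi]
    rw [Equiv.Perm.ofSubtype_apply_of_not_mem d hi']
    ring

theorem prob_shift_count_gt (n : ℕ) [NeZero n] (j : ZMod n) (k : ℕ) (hk : 2 ≤ n - k) :
    ((Finset.univ.filter
        (fun σ : Equiv.Perm (ZMod n) =>
          (Finset.univ.filter (fun i : ZMod n => i - σ i = j)).card = k)).card : ℝ) /
      (Nat.factorial n : ℝ) >
    1 / (2 * Real.exp 1 * (Nat.factorial k : ℝ)) := by
  classical
  have hkn : k ≤ n := by omega
  set m := n - k with hm
  have hm2 : 2 ≤ m := hk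
  set T := Finset.univ.filter
        (fun σ : Equiv.Perm (ZMod n) =>
          (Finset.univ.filter (fun i : ZMod n => i - σ i = j)).card = k) with hT
  have hcard : n.choose k * numDerangements m ≤ T.card := by
    let D := (S : {S : Finset (ZMod n) // S.card = k}) ×
        (derangements {x : ZMod n // x ∈ (S.1)ᶜ})
    have hDcard : Fintype.card D = n.choose k * numDerangements m := by
      rw [Fintype.card_sigma]
      have hc : ∀ S : {S : Finset (ZMod n) // S.card = k},
          Fintype.card (derangements {x : ZMod n // x ∈ (S.1)ᶜ}) = numDerangements m := by
        intro S
        rw [card_derangements_eq_numDerangements]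
        congr 1
        rw [Fintype.card_coe, Finset.card_compl, S.2]
        simp [hm, ZMod.card]
      rw [Finset.sum_congr rfl (fun S _ => hc S), Finset.sum_const, Finset.card_univ,
        Fintype.card_finset_len]
      simp [ZMod.card]
    let F : D → {σ : Perm (ZMod n) // σ ∈ T} := fun p =>
      ⟨(Equiv.Perm.ofSubtype p.2.1).trans (Equiv.addRight (-j)), by
        simp only [hT, Finset.mem_filter, Finset.mem_univ, true_and]
        rw [filter_shift_eq n j p.1.1 p.2.1 p.2.2, p.1.2]⟩
    have hFinj : Function.Injective F := by
      rintro ⟨⟨S1, h1⟩, d1, hd1⟩ ⟨⟨S2, h2⟩, d2, hd2⟩ h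
      have hσ : (Equiv.Perm.ofSubtype d1).trans (Equiv.addRight (-j)) =
          (Equiv.Perm.ofSubtype d2).trans (Equiv.addRight (-j)) := congrArg Subtype.val h
      have hπ : Equiv.Perm.ofSubtype d1 = Equiv.Perm.ofSubtype d2 := by
        ext x
        have := congrFun (congrArg (fun e : Perm (ZMod n) => (e : ZMod n → ZMod n)) hσ) x
        simpa using this
      have hS : S1 = S2 := by
        have e1 := filter_shift_eq n j S1 d1 hd1
        have e2 := filter_shift_eq n j S2 d2 hd2
        rw [← e1, ← e2, hπ]
      subst hS
      have hd : d1 = d2 := by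
        ext x
        have e1 : Equiv.Perm.ofSubtype d1 x = (d1 x : ZMod n) :=
          Equiv.Perm.ofSubtype_apply_coe d1 x
        have e2 : Equiv.Perm.ofSubtype d2 x = (d2 x : ZMod n) :=
          Equiv.Perm.ofSubtype_apply_coe d2 x
        rw [← e1, ← e2, hπ]
      subst hd
      rfl
    have := Fintype.card_le_of_injective F hFinj
    rwa [hDcard, Fintype.card_coe] at this
  have hfact : (n.choose k) * (Nat.factorial k * Nat.factorial m) = Nat.factorial n := by
    rw [hm, ← mul_assoc]; exact Nat.choose_mul_factorial_mul_factorial hkn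
  have hD1 : 1 ≤ numDerangements m := by
    have h1 := fact_le_3D m hm2
    have h2 := Nat.factorial_pos m
    omega
  have he : (3 : ℝ) < 2 * Real.exp 1 := by
    have := Real.add_one_le_exp 1
    nlinarith
  have h3D : (Nat.factorial m : ℝ) ≤ 3 * numDerangements m := by
    exact_mod_cast fact_le_3D m hm2
  have hkey : (Nat.factorial m : ℝ) < 2 * Real.exp 1 * numDerangements m := by
    have hD1' : (1 : ℝ) ≤ numDerangements m := by exact_mod_cast hD1
    nlinarith
  have hfpos : (0:ℝ) < Nat.factorial n := by positivity
  have hkpos : (0:ℝ) < Nat.factorial k := by positivity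
  have hepos : (0:ℝ) < 2 * Real.exp 1 * Nat.factorial k := by positivity
  rw [gt_iff_lt, div_lt_div_iff₀ hepos hfpos]
  have hTc : (n.choose k * numDerangements m : ℝ) ≤ T.card := by exact_mod_cast hcard
  have hfact' : ((n.choose k : ℝ)) * (Nat.factorial k * Nat.factorial m) = Nat.factorial n := by
    exact_mod_cast hfact
  have hchoosepos : (0:ℝ) < n.choose k := by
    exact_mod_cast Nat.choose_pos hkn
  calc (1:ℝ) * Nat.factorial n = (n.choose k) * (Nat.factorial k * Nat.factorial m) := by
        rw [hfact']; ring
    _ < (n.choose k * numDerangements m) * (2 * Real.exp 1 * Nat.factorial k) := by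
        nlinarith [hkey, hchoosepos, hkpos]
    _ ≤ (T.card : ℝ) * (2 * Real.exp 1 * Nat.factorial k) := by
        apply mul_le_mul_of_nonneg_right hTc (le_of_lt hepos)
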